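/- Let 0 ≤ a < b and assume Σ_{n≥1}‖P_E T'ⁿ‖ρ^{-n} + Σ_{n≥0}‖P_E T*ⁿ‖ρⁿ < ∞ for every ρ ∈ (a,b), so that for every λ ∈ A(a,b) and e ∈ E the vector Ψ̃(conj(λ))e := Σ_{n≥1} conj(λ)^{-n} T'*ⁿ e + Σ_{n≥0} conj(λ)ⁿ Tⁿ e is a well-defined element of H. If the linear span of {T'*ⁿ e : n ∈ ℕ, e ∈ E} ∪ {Tⁿ e : n ∈ ℕ, e ∈ E} is dense in H, then the linear span of {Ψ̃(conj(λ))e : e ∈ E, λ ∈ A(a,b)} is dense in H. -/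

import Mathlib

open ContinuousLinearMap MeasureTheory Real

/-- Orthogonal projection onto the closed subspace `E`, as an operator `H →L[ℂ] H`. -/
noncomputable def PE {H : Type*} [NormedAddCommGroup H] [InnerProductSpace ℂ H]
    (E : Submodule ℂ H) [CompleteSpace E] : H →L[ℂ] H :=
  E.subtypeL.comp E.orthogonalProjection

/-- The open annulus A(a,b) = {z ∈ ℂ : a < |z| < b}. -/
def annulus (a b : ℝ) : Set ℂ := {z : ℂ | a < ‖z‖ ∧ ‖z‖ < b}

/- STATEMENT 11: Assume Σ_{n≥1}‖P_E T'ⁿ‖ρ^{-n} + Σ_{n≥0}‖P_E T*ⁿ‖ρⁿ < ∞ for every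
ρ ∈ (a,b), so that Ψ̃(conj λ)e := Σ_{n≥1} conj(λ)^{-n} T'*ⁿ e + Σ_{n≥0} conj(λ)ⁿ Tⁿ e
is well defined for λ ∈ A(a,b), e ∈ E.  If the span of
{T'*ⁿ e} ∪ {Tⁿ e} (n ∈ ℕ, e ∈ E) is dense in H, then the span of
{Ψ̃(conj λ)e : e ∈ E, λ ∈ A(a,b)} is dense in H. -/
lemma my_exp_integral (k : ℤ) :
    (∫ θ : ℝ in (0:ℝ)..(2*π), Complex.exp (k * θ * Complex.I)) =
      if k = 0 then (2*π : ℂ) else 0 := by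
  by_cases hk : k = 0
  · simp [hk, intervalIntegral.integral_const]
  · rw [if_neg hk]
    have hc : (k : ℂ) * Complex.I ≠ 0 := by
      simp [hk, Complex.I_ne_zero, Complex.ext_iff]
    have h : ∀ θ : ℝ, Complex.exp (k * θ * Complex.I)
        = Complex.exp ((k * Complex.I) * θ) := fun θ => by ring_nf
    simp_rw [h]
    rw [integral_exp_mul_complex hc]
    have h1 : (k:ℂ) * Complex.I * ((2:ℝ)*π : ℝ) = k * (2*π*Complex.I) := by push_cast; ring
    rw [h1, Complex.exp_int_mul_two_pi_mul_I]
    simp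

lemma my_tsum_integral (f : ℕ → ℂ) (hf : Summable fun n => ‖f n‖) (c : ℕ → ℤ) :
    (∫ θ : ℝ in (0:ℝ)..(2*π), ∑' n, f n * Complex.exp (c n * θ * Complex.I)) =
      ∑' n, f n * (if c n = 0 then (2*π:ℂ) else 0) := by
  have h2π : (0:ℝ) ≤ 2*π := by positivity
  have hnorm : ∀ n (θ : ℝ), ‖f n * Complex.exp (c n * θ * Complex.I)‖ = ‖f n‖ := by
    intro n θ
    rw [norm_mul]
    have : ((c n : ℂ)) * (θ:ℂ) * Complex.I = ((c n * θ : ℝ) : ℂ) * Complex.I := by push_cast; ring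
    rw [this, Complex.norm_exp_ofReal_mul_I, mul_one]
  have hcont : ∀ n, Continuous (fun θ : ℝ => f n * Complex.exp (c n * θ * Complex.I)) := by
    intro n
    fun_prop
  have hint : ∀ n, IntegrableOn (fun θ : ℝ => f n * Complex.exp (c n * θ * Complex.I))
      (Set.Ioc 0 (2*π)) volume := fun n => (hcont n).integrableOn_Ioc
  have hsum : Summable (fun n => ∫ θ in Set.Ioc (0:ℝ) (2*π),
      ‖f n * Complex.exp (c n * θ * Complex.I)‖) := by
    have : ∀ n, (∫ θ in Set.Ioc (0:ℝ) (2*π), ‖f n * Complex.exp (c n * θ * Complex.I)‖)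
        = (2*π) * ‖f n‖ := by
      intro n
      simp_rw [hnorm n]
      rw [setIntegral_const]
      simp [Real.volume_Ioc, ENNReal.toReal_ofReal h2π, smul_eq_mul, Real.pi_pos.le]
    simp only [this]
    exact hf.mul_left (2*π)
  rw [intervalIntegral.integral_of_le h2π,
    ← integral_tsum_of_summable_integral_norm hint hsum]
  congr 1
  funext n
  rw [MeasureTheory.integral_const_mul, ← intervalIntegral.integral_of_le h2π, my_exp_integral]

lemma aux_norm_bound {H : Type*} [NormedAddCommGroup H] [InnerProductSpace ℂ H] [CompleteSpace H]
    (A : H →L[ℂ] H) (E : Submodule ℂ H) [CompleteSpace E] {e : H} (he : e ∈ E) :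
    ‖(ContinuousLinearMap.adjoint A) e‖ ≤ ‖(PE E).comp A‖ * ‖e‖ := by
  have hP : ContinuousLinearMap.adjoint (PE E) = PE E :=
    (isSelfAdjoint_starProjection E).adjoint_eq
  have hPe : (PE E) e = e := by
    simp only [PE, coe_comp', Function.comp_apply, Submodule.subtypeL_apply]
    exact Submodule.starProjection_eq_self_iff.mpr he
  have h1 : (ContinuousLinearMap.adjoint A) e
      = (ContinuousLinearMap.adjoint ((PE E).comp A)) e := by
    rw [ContinuousLinearMap.adjoint_comp, hP]
    simp [hPe]
  rw [h1]
  calc ‖(ContinuousLinearMap.adjoint ((PE E).comp A)) e‖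
      ≤ ‖ContinuousLinearMap.adjoint ((PE E).comp A)‖ * ‖e‖ := le_opNorm _ _
    _ = ‖(PE E).comp A‖ * ‖e‖ := by rw [LinearIsometryEquiv.norm_map]

lemma circle_pow (r : ℝ) (θ : ℝ) (z k : ℤ) :
    ((r:ℂ) * Complex.exp (θ * Complex.I)) ^ z * Complex.exp ((-k) * θ * Complex.I)
      = (r:ℂ) ^ z * Complex.exp ((z - k) * θ * Complex.I) := by
  rw [mul_zpow, ← Complex.exp_int_mul, mul_assoc, ← Complex.exp_add]
  congr 2
  push_cast
  ring

theorem stmt_11 {H : Type*} [NormedAddCommGroup H] [InnerProductSpace ℂ H] [CompleteSpace H]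
    (T T' W : H →L[ℂ] H)
    (hleft : ∃ S : H →L[ℂ] H, S.comp T = ContinuousLinearMap.id ℂ H)
    (hW1 : W.comp ((ContinuousLinearMap.adjoint T).comp T) = ContinuousLinearMap.id ℂ H)
    (hW2 : ((ContinuousLinearMap.adjoint T).comp T).comp W = ContinuousLinearMap.id ℂ H)
    (hT' : T' = T.comp W)
    (E : Submodule ℂ H) [CompleteSpace E]
    (a b : ℝ) (ha : 0 ≤ a) (hab : a < b)
    (hnorm : ∀ ρ ∈ Set.Ioo a b,
      Summable (fun n : ℕ => ‖(PE E).comp (T' ^ (n + 1))‖ * ρ ^ (-(n + 1 : ℤ))) ∧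
      Summable (fun n : ℕ =>
        ‖(PE E).comp ((ContinuousLinearMap.adjoint T) ^ n)‖ * ρ ^ n))
    (hdense : Dense (↑(Submodule.span ℂ
        ({y : H | ∃ (n : ℕ), ∃ e ∈ E, y = ((ContinuousLinearMap.adjoint T') ^ n) e} ∪
         {y : H | ∃ (n : ℕ), ∃ e ∈ E, y = (T ^ n) e})) : Set H)) :
    Dense (↑(Submodule.span ℂ
      {y : H | ∃ lam ∈ annulus a b, ∃ e ∈ E,
        y = (∑' n : ℕ, ((starRingEnd ℂ lam) ^ (-(n + 1 : ℤ))) •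
              ((ContinuousLinearMap.adjoint T') ^ (n + 1)) e) +
            ∑' n : ℕ, ((starRingEnd ℂ lam) ^ n) • (T ^ n) e}) : Set H) := by
  rw [Submodule.dense_iff_topologicalClosure_eq_top, Submodule.topologicalClosure_eq_top_iff]
  have hbot : (Submodule.span ℂ
      ({y : H | ∃ (n : ℕ), ∃ e ∈ E, y = ((ContinuousLinearMap.adjoint T') ^ n) e} ∪
       {y : H | ∃ (n : ℕ), ∃ e ∈ E, y = (T ^ n) e}))ᗮ = ⊥ := by
    rw [← Submodule.topologicalClosure_eq_top_iff,
      ← Submodule.dense_iff_topologicalClosure_eq_top]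
    exact hdense
  rw [Submodule.eq_bot_iff]
  intro x hx
  -- the coefficients all vanish
  have key : ∀ e ∈ E,
      (∀ n : ℕ, (inner ℂ x (((ContinuousLinearMap.adjoint T') ^ (n+1)) e) : ℂ) = 0)
      ∧ (∀ n : ℕ, (inner ℂ x ((T ^ n) e) : ℂ) = 0) := by
    intro e he
    -- vector norm bounds
    have hvecA : ∀ n : ℕ, ‖((ContinuousLinearMap.adjoint T') ^ (n+1)) e‖
        ≤ ‖(PE E).comp (T' ^ (n+1))‖ * ‖e‖ := by
      intro n
      have heq : (ContinuousLinearMap.adjoint T') ^ (n+1)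
          = ContinuousLinearMap.adjoint (T' ^ (n+1)) := by
        simp [← ContinuousLinearMap.star_eq_adjoint, star_pow]
      rw [heq]
      exact aux_norm_bound (T' ^ (n+1)) E he
    have hvecB : ∀ n : ℕ, ‖(T ^ n) e‖
        ≤ ‖(PE E).comp ((ContinuousLinearMap.adjoint T) ^ n)‖ * ‖e‖ := by
      intro n
      have heq : T ^ n
          = ContinuousLinearMap.adjoint ((ContinuousLinearMap.adjoint T) ^ n) := by
        simp [← ContinuousLinearMap.star_eq_adjoint, star_pow]
      rw [heq]
      exact aux_norm_bound ((ContinuousLinearMap.adjoint T) ^ n) E he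
    have hsummA : ∀ μ : ℂ, μ ∈ annulus a b →
        Summable (fun n : ℕ =>
          (μ ^ (-(n+1:ℤ))) • ((ContinuousLinearMap.adjoint T') ^ (n+1)) e) := by
      intro μ hμ
      apply Summable.of_norm_bounded
        (g := fun n : ℕ => (‖(PE E).comp (T' ^ (n+1))‖ * ‖μ‖ ^ (-(n+1:ℤ))) * ‖e‖)
        (((hnorm ‖μ‖ ⟨hμ.1, hμ.2⟩).1).mul_right ‖e‖)
      intro n
      rw [norm_smul, norm_zpow]
      calc ‖μ‖ ^ (-(n+1:ℤ)) * ‖((ContinuousLinearMap.adjoint T') ^ (n+1)) e‖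
          ≤ ‖μ‖ ^ (-(n+1:ℤ)) * (‖(PE E).comp (T' ^ (n+1))‖ * ‖e‖) := by
            exact mul_le_mul_of_nonneg_left (hvecA n) (zpow_nonneg (norm_nonneg μ) _)
        _ = (‖(PE E).comp (T' ^ (n+1))‖ * ‖μ‖ ^ (-(n+1:ℤ))) * ‖e‖ := by ring
    have hsummB : ∀ μ : ℂ, μ ∈ annulus a b →
        Summable (fun n : ℕ => (μ ^ n) • (T ^ n) e) := by
      intro μ hμ
      apply Summable.of_norm_bounded
        (g := fun n : ℕ => (‖(PE E).comp ((ContinuousLinearMap.adjoint T) ^ n)‖ * ‖μ‖ ^ n) * ‖e‖)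
        (((hnorm ‖μ‖ ⟨hμ.1, hμ.2⟩).2).mul_right ‖e‖)
      intro n
      rw [norm_smul, norm_pow]
      calc ‖μ‖ ^ n * ‖(T ^ n) e‖
          ≤ ‖μ‖ ^ n * (‖(PE E).comp ((ContinuousLinearMap.adjoint T) ^ n)‖ * ‖e‖) := by
            exact mul_le_mul_of_nonneg_left (hvecB n) (pow_nonneg (norm_nonneg μ) _)
        _ = _ := by ring
    -- the Laurent series vanishes on the annulus
    have h0 : ∀ μ : ℂ, μ ∈ annulus a b →
        (∑' n : ℕ, (inner ℂ x (((ContinuousLinearMap.adjoint T') ^ (n+1)) e) : ℂ)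
            * μ ^ (-(n+1:ℤ)))
        + (∑' n : ℕ, (inner ℂ x ((T ^ n) e) : ℂ) * μ ^ n) = 0 := by
      intro μ hμ
      have hlam : (starRingEnd ℂ) μ ∈ annulus a b := by
        have : ‖(starRingEnd ℂ) μ‖ = ‖μ‖ := RCLike.norm_conj μ
        exact ⟨by rw [this]; exact hμ.1, by rw [this]; exact hμ.2⟩
      have hmem : ((∑' n : ℕ, ((starRingEnd ℂ ((starRingEnd ℂ) μ)) ^ (-(n + 1 : ℤ))) •
              ((ContinuousLinearMap.adjoint T') ^ (n + 1)) e) +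
            ∑' n : ℕ, ((starRingEnd ℂ ((starRingEnd ℂ) μ)) ^ n) • (T ^ n) e) ∈
          Submodule.span ℂ
            {y : H | ∃ lam ∈ annulus a b, ∃ e ∈ E,
              y = (∑' n : ℕ, ((starRingEnd ℂ lam) ^ (-(n + 1 : ℤ))) •
                    ((ContinuousLinearMap.adjoint T') ^ (n + 1)) e) +
                  ∑' n : ℕ, ((starRingEnd ℂ lam) ^ n) • (T ^ n) e} :=
        Submodule.subset_span ⟨(starRingEnd ℂ) μ, hlam, e, he, rfl⟩
      have hz := (Submodule.mem_orthogonal _ _).mp hx _ hmem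
      rw [inner_eq_zero_symm] at hz
      simp only [Complex.conj_conj] at hz
      rw [inner_add_right] at hz
      have e1 : (inner ℂ x (∑' n : ℕ,
            (μ ^ (-(n+1:ℤ))) • ((ContinuousLinearMap.adjoint T') ^ (n+1)) e) : ℂ)
          = ∑' n : ℕ, (inner ℂ x (((ContinuousLinearMap.adjoint T') ^ (n+1)) e) : ℂ)
              * μ ^ (-(n+1:ℤ)) := by
        have hmap := (hsummA μ hμ).hasSum.mapL (innerSL ℂ x)
        simp only [innerSL_apply_apply] at hmap
        rw [← hmap.tsum_eq]
        congr 1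
        funext n
        rw [inner_smul_right]
        ring
      have e2 : (inner ℂ x (∑' n : ℕ, (μ ^ n) • (T ^ n) e) : ℂ)
          = ∑' n : ℕ, (inner ℂ x ((T ^ n) e) : ℂ) * μ ^ n := by
        have hmap := (hsummB μ hμ).hasSum.mapL (innerSL ℂ x)
        simp only [innerSL_apply_apply] at hmap
        rw [← hmap.tsum_eq]
        congr 1
        funext n
        rw [inner_smul_right]
        ring
      rw [e1, e2] at hz
      exact hz
    -- integrate against characters on a circle of radius ρ
    set ρ : ℝ := (a+b)/2 with hρdef
    have hρ : ρ ∈ Set.Ioo a b := ⟨by rw [hρdef]; linarith, by rw [hρdef]; linarith⟩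
    have hρ0 : 0 < ρ := lt_of_le_of_lt ha hρ.1
    have hρC : ((ρ:ℂ)) ≠ 0 := by exact_mod_cast hρ0.ne'
    have hfA : Summable (fun n : ℕ =>
        ‖(inner ℂ x (((ContinuousLinearMap.adjoint T') ^ (n+1)) e) : ℂ)
          * (ρ:ℂ) ^ (-(n+1:ℤ))‖) := by
      refine Summable.of_nonneg_of_le (fun n => norm_nonneg _) ?_
        (((hnorm ρ hρ).1).mul_left (‖x‖ * ‖e‖))
      · intro n
        rw [norm_mul, norm_zpow, Complex.norm_real, Real.norm_of_nonneg hρ0.le]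
        calc ‖(inner ℂ x (((ContinuousLinearMap.adjoint T') ^ (n+1)) e) : ℂ)‖ * ρ ^ (-(n+1:ℤ))
            ≤ (‖x‖ * (‖(PE E).comp (T' ^ (n+1))‖ * ‖e‖)) * ρ ^ (-(n+1:ℤ)) := by
              apply mul_le_mul_of_nonneg_right _ (zpow_nonneg hρ0.le _)
              calc ‖(inner ℂ x (((ContinuousLinearMap.adjoint T') ^ (n+1)) e) : ℂ)‖
                  ≤ ‖x‖ * ‖((ContinuousLinearMap.adjoint T') ^ (n+1)) e‖ :=
                    norm_inner_le_norm _ _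
                _ ≤ ‖x‖ * (‖(PE E).comp (T' ^ (n+1))‖ * ‖e‖) :=
                    mul_le_mul_of_nonneg_left (hvecA n) (norm_nonneg x)
          _ = (‖x‖ * ‖e‖) * (‖(PE E).comp (T' ^ (n+1))‖ * ρ ^ (-(n+1:ℤ))) := by ring
    have hfB : Summable (fun n : ℕ =>
        ‖(inner ℂ x ((T ^ n) e) : ℂ) * (ρ:ℂ) ^ n‖) := by
      refine Summable.of_nonneg_of_le (fun n => norm_nonneg _) ?_
        (((hnorm ρ hρ).2).mul_left (‖x‖ * ‖e‖))
      · intro n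
        rw [norm_mul, norm_pow, Complex.norm_real, Real.norm_of_nonneg hρ0.le]
        calc ‖(inner ℂ x ((T ^ n) e) : ℂ)‖ * ρ ^ n
            ≤ (‖x‖ * (‖(PE E).comp ((ContinuousLinearMap.adjoint T) ^ n)‖ * ‖e‖)) * ρ ^ n := by
              apply mul_le_mul_of_nonneg_right _ (pow_nonneg hρ0.le _)
              calc ‖(inner ℂ x ((T ^ n) e) : ℂ)‖
                  ≤ ‖x‖ * ‖(T ^ n) e‖ := norm_inner_le_norm _ _
                _ ≤ ‖x‖ * (‖(PE E).comp ((ContinuousLinearMap.adjoint T) ^ n)‖ * ‖e‖) :=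
                    mul_le_mul_of_nonneg_left (hvecB n) (norm_nonneg x)
          _ = _ := by ring
    have main : ∀ k : ℤ,
        (∑' n : ℕ, ((inner ℂ x (((ContinuousLinearMap.adjoint T') ^ (n+1)) e) : ℂ)
            * (ρ:ℂ) ^ (-(n+1:ℤ)))
           * (if -(n+1:ℤ) - k = 0 then (2*π:ℂ) else 0))
        + (∑' n : ℕ, ((inner ℂ x ((T ^ n) e) : ℂ) * (ρ:ℂ) ^ n)
           * (if (n:ℤ) - k = 0 then (2*π:ℂ) else 0)) = 0 := by
      intro k
      set cA : ℕ → ℤ := fun n => -(n+1:ℤ) - k with hcA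
      set cB : ℕ → ℤ := fun n => (n:ℤ) - k with hcB
      have hμθ : ∀ θ : ℝ, ((ρ:ℂ) * Complex.exp (θ * Complex.I)) ∈ annulus a b := by
        intro θ
        have hn : ‖(ρ:ℂ) * Complex.exp (θ * Complex.I)‖ = ρ := by
          rw [norm_mul, Complex.norm_exp_ofReal_mul_I, mul_one, Complex.norm_real,
            Real.norm_of_nonneg hρ0.le]
        exact ⟨by rw [hn]; exact hρ.1, by rw [hn]; exact hρ.2⟩
      have hFA : ∀ θ : ℝ,
          (∑' n : ℕ, ((inner ℂ x (((ContinuousLinearMap.adjoint T') ^ (n+1)) e) : ℂ)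
              * (ρ:ℂ) ^ (-(n+1:ℤ)))
            * Complex.exp ((cA n : ℂ) * θ * Complex.I))
          = (∑' n : ℕ, (inner ℂ x (((ContinuousLinearMap.adjoint T') ^ (n+1)) e) : ℂ)
              * ((ρ:ℂ) * Complex.exp (θ*Complex.I)) ^ (-(n+1:ℤ)))
              * Complex.exp ((-k) * θ * Complex.I) := by
        intro θ
        rw [← tsum_mul_right]
        congr 1
        funext n
        have hc := circle_pow ρ θ (-(n+1:ℤ)) k
        rw [hcA]
        push_cast at hc ⊢
        rw [← FunLike.coe_pow_eq_iterate]
        linear_combination (-(inner ℂ x (((ContinuousLinearMap.adjoint T') ^ (n+1)) e) : ℂ)) * hc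
      have hFB : ∀ θ : ℝ,
          (∑' n : ℕ, ((inner ℂ x ((T ^ n) e) : ℂ) * (ρ:ℂ) ^ n)
            * Complex.exp ((cB n : ℂ) * θ * Complex.I))
          = (∑' n : ℕ, (inner ℂ x ((T ^ n) e) : ℂ)
              * ((ρ:ℂ) * Complex.exp (θ*Complex.I)) ^ n)
              * Complex.exp ((-k) * θ * Complex.I) := by
        intro θ
        rw [← tsum_mul_right]
        congr 1
        funext n
        have hc := circle_pow ρ θ (n:ℤ) k
        simp only [zpow_natCast] at hc
        rw [hcB]
        push_cast at hc ⊢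
        rw [← FunLike.coe_pow_eq_iterate]
        linear_combination (-(inner ℂ x ((T ^ n) e) : ℂ)) * hc
      have hzero : ∀ θ : ℝ,
          (∑' n : ℕ, ((inner ℂ x (((ContinuousLinearMap.adjoint T') ^ (n+1)) e) : ℂ)
              * (ρ:ℂ) ^ (-(n+1:ℤ)))
            * Complex.exp ((cA n : ℂ) * θ * Complex.I))
          = -(∑' n : ℕ, ((inner ℂ x ((T ^ n) e) : ℂ) * (ρ:ℂ) ^ n)
            * Complex.exp ((cB n : ℂ) * θ * Complex.I)) := by
        intro θ
        rw [hFA θ, hFB θ, ← neg_mul]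
        congr 1
        have h := h0 _ (hμθ θ)
        linear_combination h
      have iA := my_tsum_integral _ hfA cA
      have iB := my_tsum_integral _ hfB cB
      have hneg : (∫ θ : ℝ in (0:ℝ)..(2*π),
          ∑' n : ℕ, ((inner ℂ x (((ContinuousLinearMap.adjoint T') ^ (n+1)) e) : ℂ)
              * (ρ:ℂ) ^ (-(n+1:ℤ)))
            * Complex.exp ((cA n : ℂ) * θ * Complex.I))
          = -(∫ θ : ℝ in (0:ℝ)..(2*π),
            ∑' n : ℕ, ((inner ℂ x ((T ^ n) e) : ℂ) * (ρ:ℂ) ^ n)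
              * Complex.exp ((cB n : ℂ) * θ * Complex.I)) := by
        rw [← intervalIntegral.integral_neg]
        apply intervalIntegral.integral_congr
        intro θ _
        exact hzero θ
      rw [iA, iB] at hneg
      rw [hcA, hcB] at hneg
      linear_combination hneg
    constructor
    · intro m
      have h := main (-(m+1:ℤ))
      have hA : (∑' n : ℕ, ((inner ℂ x (((ContinuousLinearMap.adjoint T') ^ (n+1)) e) : ℂ)
            * (ρ:ℂ) ^ (-(n+1:ℤ)))
           * (if -(n+1:ℤ) - (-(m+1:ℤ)) = 0 then (2*π:ℂ) else 0))
          = ((inner ℂ x (((ContinuousLinearMap.adjoint T') ^ (m+1)) e) : ℂ)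
            * (ρ:ℂ) ^ (-(m+1:ℤ))) * (2*π:ℂ) := by
        rw [tsum_eq_single m]
        · simp
        · intro n hn
          rw [if_neg, mul_zero]
          omega
      have hB : (∑' n : ℕ, ((inner ℂ x ((T ^ n) e) : ℂ) * (ρ:ℂ) ^ n)
           * (if (n:ℤ) - (-(m+1:ℤ)) = 0 then (2*π:ℂ) else 0)) = 0 := by
        have : ∀ n : ℕ, ((inner ℂ x ((T ^ n) e) : ℂ) * (ρ:ℂ) ^ n)
           * (if (n:ℤ) - (-(m+1:ℤ)) = 0 then (2*π:ℂ) else 0) = 0 := by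
          intro n
          rw [if_neg, mul_zero]
          omega
        simp only [this, tsum_zero]
      rw [hA, hB, add_zero] at h
      have h2π : (2*π:ℂ) ≠ 0 := by
        simp [Real.pi_ne_zero, Complex.ext_iff]
      have hz : (ρ:ℂ) ^ (-(m+1:ℤ)) ≠ 0 := zpow_ne_zero _ hρC
      rcases mul_eq_zero.mp h with h' | h'
      · rcases mul_eq_zero.mp h' with h'' | h''
        · exact h''
        · exact absurd h'' hz
      · exact absurd h' h2π
    · intro m
      have h := main (m:ℤ)
      have hA : (∑' n : ℕ, ((inner ℂ x (((ContinuousLinearMap.adjoint T') ^ (n+1)) e) : ℂ)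
            * (ρ:ℂ) ^ (-(n+1:ℤ)))
           * (if -(n+1:ℤ) - (m:ℤ) = 0 then (2*π:ℂ) else 0)) = 0 := by
        have : ∀ n : ℕ, ((inner ℂ x (((ContinuousLinearMap.adjoint T') ^ (n+1)) e) : ℂ)
            * (ρ:ℂ) ^ (-(n+1:ℤ)))
           * (if -(n+1:ℤ) - (m:ℤ) = 0 then (2*π:ℂ) else 0) = 0 := by
          intro n
          rw [if_neg, mul_zero]
          omega
        simp only [this, tsum_zero]
      have hB : (∑' n : ℕ, ((inner ℂ x ((T ^ n) e) : ℂ) * (ρ:ℂ) ^ n)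
           * (if (n:ℤ) - (m:ℤ) = 0 then (2*π:ℂ) else 0))
          = ((inner ℂ x ((T ^ m) e) : ℂ) * (ρ:ℂ) ^ m) * (2*π:ℂ) := by
        rw [tsum_eq_single m]
        · simp
        · intro n hn
          rw [if_neg, mul_zero]
          omega
      rw [hA, hB, zero_add] at h
      have h2π : (2*π:ℂ) ≠ 0 := by
        simp [Real.pi_ne_zero, Complex.ext_iff]
      have hz : (ρ:ℂ) ^ m ≠ 0 := pow_ne_zero _ hρC
      rcases mul_eq_zero.mp h with h' | h'
      · rcases mul_eq_zero.mp h' with h'' | h''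
        · exact h''
        · exact absurd h'' hz
      · exact absurd h' h2π
  -- conclude x = 0
  have hx1 : x ∈ (Submodule.span ℂ
      ({y : H | ∃ (n : ℕ), ∃ e ∈ E, y = ((ContinuousLinearMap.adjoint T') ^ n) e} ∪
       {y : H | ∃ (n : ℕ), ∃ e ∈ E, y = (T ^ n) e}))ᗮ := by
    rw [Submodule.mem_orthogonal]
    intro u hu
    induction hu using Submodule.span_induction with
    | mem y hy =>
      rw [← inner_eq_zero_symm]
      rcases hy with hy | hy
      · obtain ⟨n, e, he, rfl⟩ := hy
        cases n with
        | zero => simpa using (key e he).2 0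
        | succ m => exact (key e he).1 m
      · obtain ⟨n, e, he, rfl⟩ := hy
        exact (key e he).2 n
    | zero => simp
    | add u v hu hv hu' hv' => rw [inner_add_left, hu', hv', add_zero]
    | smul c u hu hu' => rw [inner_smul_left, hu', mul_zero]
  rw [hbot] at hx1
  simpa using hx1
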